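/- arXiv:1604.02489 — 2 statements merged into one kernel-verified Lean document; each statement's English description precedes it below -/
import Mathlib

section
/- For any k, d ∈ ℕ and ε > 0 there exists r = r(k,d,ε) ∈ ℕ such that for any polynomial mappings φ_1,…,φ_k ∈ Pol⁰_d([r], 𝕋) there exists a nonempty finite set α ⊆ [r] such that dist(φ_i(α), 0) < ε for all i ∈ {1,…,k}. -/
open Finset

/-- The `β`-derivative of a map `φ : F(A) → H`: `D_β φ (α) = φ(α ∪ β) - φ(α)`. -/
def fsDeriv {ι H : Type*} [DecidableEq ι] [AddCommGroup H]
    (φ : Finset ι → H) (β : Finset ι) : Finset ι → H :=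
  fun α => φ (α ∪ β) - φ α

/-- Iterated derivative `D_{β 0} ⋯ D_{β (n-1)} φ`. -/
def iterDeriv {ι H : Type*} [DecidableEq ι] [AddCommGroup H] :
    {n : ℕ} → (Finset ι → H) → (Fin n → Finset ι) → (Finset ι → H)
  | 0, φ, _ => φ
  | _ + 1, φ, β => iterDeriv (fsDeriv φ (β 0)) (fun i => β i.succ)

/-- `φ : F(A) → H` is polynomial of degree ≤ d: any d+1 pairwise disjoint
derivatives (by finite subsets of `A`) kill `φ` on `F(A)` away from them. -/
def IsPolyDeg {ι H : Type*} [DecidableEq ι] [AddCommGroup H]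
    (A : Finset ι) (d : ℕ) (φ : Finset ι → H) : Prop :=
  ∀ β : Fin (d + 1) → Finset ι, (∀ i, β i ⊆ A) →
    (∀ i j, i ≠ j → Disjoint (β i) (β j)) →
    ∀ α : Finset ι, α ⊆ A → (∀ i, Disjoint α (β i)) → iterDeriv φ β α = 0

/-- `Pol⁰_d(A,H)`: polynomial maps of degree ≤ d vanishing at `∅`. -/
def Pol0 {ι H : Type*} [DecidableEq ι] [AddCommGroup H]
    (A : Finset ι) (d : ℕ) (φ : Finset ι → H) : Prop :=
  IsPolyDeg A d φ ∧ φ (∅ : Finset ι) = 0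

/-- `‖x‖`: the distance from a real number `x` to `ℤ`. -/
noncomputable def distToInt (x : ℝ) : ℝ := |x - round x|

/-! ### Auxiliary material -/

section Expansion

variable {ι H : Type*} [DecidableEq ι] [AddCommGroup H]

/-- The inclusion-exclusion expansion of the iterated derivative. -/
lemma iterDeriv_eq_sum : ∀ (n : ℕ) (φ : Finset ι → H) (β : Fin n → Finset ι)
    (α : Finset ι), iterDeriv φ β α
      = ∑ S : Finset (Fin n), ((-1 : ℤ) ^ (n - S.card)) • φ (α ∪ S.biUnion β) := by
  intro n
  induction n with
  | zero =>
      intro φ β α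
      have hd : ∀ S : Finset (Fin 0), S = ∅ := fun S => Finset.eq_empty_of_isEmpty S
      have huniv : (Finset.univ : Finset (Finset (Fin 0))) = {∅} := by
        apply Finset.eq_singleton_iff_unique_mem.2
        exact ⟨Finset.mem_univ _, fun S _ => hd S⟩
      rw [huniv, Finset.sum_singleton]
      simp [iterDeriv]
  | succ n ih =>
      intro φ β α
      have key : ∀ g : Finset (Fin (n + 1)) → H,
          (∑ T : Finset (Fin (n + 1)), g T)
            = ∑ S : Finset (Fin n), (g (insert 0 (S.map (Fin.succEmb n)))
                + g (S.map (Fin.succEmb n))) := by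
        intro g
        have hf : Function.Bijective
            (fun p : Bool × Finset (Fin n) =>
              cond p.1 (insert 0 (p.2.map (Fin.succEmb n))) (p.2.map (Fin.succEmb n))) := by
          rw [Fintype.bijective_iff_injective_and_card]
          constructor
          · rintro ⟨b, S⟩ ⟨b', S'⟩ h
            have h0 : ∀ X : Finset (Fin n), (0 : Fin (n+1)) ∉ X.map (Fin.succEmb n) := by
              intro X hX
              rcases Finset.mem_map.1 hX with ⟨x, -, hx⟩
              exact (Fin.succ_ne_zero x) hx
            dsimp only at h
            cases b <;> cases b' <;> simp only [Bool.cond_false, Bool.cond_true] at h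
            · exact Prod.ext rfl (Finset.map_injective _ h)
            · have : (0 : Fin (n+1)) ∈ S.map (Fin.succEmb n) := by
                rw [h]; exact Finset.mem_insert_self _ _
              exact absurd this (h0 S)
            · have : (0 : Fin (n+1)) ∈ S'.map (Fin.succEmb n) := by
                rw [← h]; exact Finset.mem_insert_self _ _
              exact absurd this (h0 S')
            · have : S.map (Fin.succEmb n) = S'.map (Fin.succEmb n) := by
                have := congrArg (fun X => Finset.erase X 0) h
                simpa [Finset.erase_insert (h0 S), Finset.erase_insert (h0 S')] using this
              exact Prod.ext rfl (Finset.map_injective _ this)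
          · simp [Fintype.card_finset, pow_succ, mul_comm]
        calc (∑ T : Finset (Fin (n + 1)), g T)
            = ∑ p : Bool × Finset (Fin n),
                g (cond p.1 (insert 0 (p.2.map (Fin.succEmb n)))
                   (p.2.map (Fin.succEmb n))) :=
              (Fintype.sum_bijective _ hf _ _ (fun p => rfl)).symm
          _ = ∑ S : Finset (Fin n), (g (insert 0 (S.map (Fin.succEmb n)))
                + g (S.map (Fin.succEmb n))) := by
              rw [Fintype.sum_prod_type, Fintype.sum_bool, ← Finset.sum_add_distrib]
              simp only [Bool.cond_true, Bool.cond_false]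
      show iterDeriv (fsDeriv φ (β 0)) (fun i => β i.succ) α = _
      rw [ih (fsDeriv φ (β 0)) (fun i => β i.succ) α, key]
      refine Finset.sum_congr rfl ?_
      intro S _
      have hmap : (S.map (Fin.succEmb n)).biUnion β = S.biUnion (fun i => β i.succ) := by
        rw [Finset.map_eq_image, Finset.image_biUnion]
        rfl
      have h0 : (0 : Fin (n+1)) ∉ S.map (Fin.succEmb n) := by
        intro hX
        rcases Finset.mem_map.1 hX with ⟨x, -, hx⟩
        exact (Fin.succ_ne_zero x) hx
      have hcard1 : (insert (0 : Fin (n+1)) (S.map (Fin.succEmb n))).card = S.card + 1 := by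
        rw [Finset.card_insert_of_notMem h0, Finset.card_map]
      have hcard2 : (S.map (Fin.succEmb n)).card = S.card := Finset.card_map _
      have hSle : S.card ≤ n := by
        simpa using Finset.card_le_univ S
      have hpow : ((-1 : ℤ) ^ (n + 1 - S.card)) = -((-1 : ℤ) ^ (n - S.card)) := by
        have : n + 1 - S.card = (n - S.card) + 1 := by omega
        rw [this, pow_succ]
        ring
      rw [hcard1, hcard2, hmap]
      have hbu : α ∪ (insert (0:Fin (n+1)) (S.map (Fin.succEmb n))).biUnion β
          = (α ∪ S.biUnion (fun i => β i.succ)) ∪ β 0 := by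
        rw [Finset.biUnion_insert, hmap]
        ext x
        simp [or_comm, or_assoc, or_left_comm]
      rw [hbu]
      have : n + 1 - (S.card + 1) = n - S.card := by omega
      rw [this, hpow, fsDeriv]
      show _ • (φ _ - φ _) = _
      rw [smul_sub, neg_smul, sub_eq_add_neg]

end Expansion

section Encoding

/-- Encoding of a finite set as a sum of powers `4 ^ t = 2 ^ (2 t)`. -/
def setEnc (A : Finset ℕ) : ℕ := ∑ t ∈ A, 2 ^ (2 * t)

lemma setEnc_union {A B : Finset ℕ} (h : Disjoint A B) :
    setEnc (A ∪ B) = setEnc A + setEnc B := by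
  classical
  exact Finset.sum_union h

lemma setEnc_eq_geomSum (A : Finset ℕ) :
    setEnc A = ∑ i ∈ A.image (fun t => 2 * t), 2 ^ i := by
  rw [Finset.sum_image]
  · rfl
  · intro a _ b _ h; simp only at h; omega

lemma setEnc_injective : Function.Injective setEnc := by
  intro A B h
  rw [setEnc_eq_geomSum, setEnc_eq_geomSum] at h
  have := Finset.geomSum_injective (n := 2) le_rfl h
  have him : A.image (fun t => 2 * t) = B.image (fun t => 2 * t) := this
  ext t
  constructor
  · intro ht
    have : 2 * t ∈ B.image (fun t => 2 * t) := him ▸ Finset.mem_image_of_mem _ ht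
    rcases Finset.mem_image.1 this with ⟨s, hs, hst⟩
    have : s = t := by omega
    exact this ▸ hs
  · intro ht
    have : 2 * t ∈ A.image (fun t => 2 * t) := him.symm ▸ Finset.mem_image_of_mem _ ht
    rcases Finset.mem_image.1 this with ⟨s, hs, hst⟩
    have : s = t := by omega
    exact this ▸ hs

/-- The key carry-free lemma: if the sum of two encodings is an encoding, then the
two sets are disjoint. -/
lemma disjoint_of_setEnc_add {A B D : Finset ℕ} (h : setEnc A + setEnc B = setEnc D) :
    Disjoint A B := by
  classical
  -- `setEnc A + setEnc B = setEnc ((A \ B ∪ B \ A)) + ∑_{t ∈ A ∩ B} 2^(2t+1)`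
  have hsplit : setEnc A + setEnc B
      = (∑ i ∈ (((A \ B ∪ B \ A)).image (fun t => 2 * t)) ∪ ((A ∩ B).image (fun t => 2 * t + 1)),
          2 ^ i) := by
    have h1 : setEnc A + setEnc B = setEnc (A ∪ B) + setEnc (A ∩ B) := by
      unfold setEnc
      rw [Finset.sum_union_inter]
    have h2 : A ∪ B = ((A \ B ∪ B \ A)) ∪ (A ∩ B) := by
      ext x
      simp only [Finset.mem_union, Finset.mem_sdiff, Finset.mem_inter]
      tauto
    have h3 : Disjoint ((A \ B ∪ B \ A)) (A ∩ B) := by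
      rw [Finset.disjoint_left]
      intro x hx hx2
      simp only [Finset.mem_union, Finset.mem_sdiff, Finset.mem_inter] at hx hx2
      tauto
    have h4 : setEnc (A ∪ B) + setEnc (A ∩ B)
        = setEnc ((A \ B ∪ B \ A)) + (setEnc (A ∩ B) + setEnc (A ∩ B)) := by
      rw [h2, setEnc_union h3]; ring
    have h5 : setEnc (A ∩ B) + setEnc (A ∩ B)
        = ∑ i ∈ (A ∩ B).image (fun t => 2 * t + 1), 2 ^ i := by
      rw [Finset.sum_image (by intro a _ b _ h; simp only at h; omega)]
      unfold setEnc
      rw [← Finset.sum_add_distrib]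
      refine Finset.sum_congr rfl ?_
      intro t _
      rw [pow_succ]
      ring
    have hdisj : Disjoint (((A \ B ∪ B \ A)).image (fun t => 2 * t))
        ((A ∩ B).image (fun t => 2 * t + 1)) := by
      rw [Finset.disjoint_left]
      intro x hx hx'
      rcases Finset.mem_image.1 hx with ⟨a, _, ha⟩
      rcases Finset.mem_image.1 hx' with ⟨b, _, hb⟩
      omega
    rw [h1, h4, h5, setEnc_eq_geomSum]
    exact (Finset.sum_union hdisj).symm
  rw [hsplit, setEnc_eq_geomSum] at h
  have hsets := Finset.geomSum_injective (n := 2) le_rfl h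
  rw [Finset.disjoint_left]
  intro t htA htB
  have htx : 2 * t + 1 ∈ (((A \ B ∪ B \ A)).image (fun t => 2 * t)) ∪ ((A ∩ B).image (fun t => 2 * t + 1)) :=
    Finset.mem_union_right _ (Finset.mem_image_of_mem _ (Finset.mem_inter.2 ⟨htA, htB⟩))
  have : 2 * t + 1 ∈ D.image (fun t => 2 * t) := hsets ▸ htx
  rcases Finset.mem_image.1 this with ⟨s, _, hs⟩
  omega

end Encoding

section Folkman

open Hindman

/-- The stream of powers `4 ^ i`. -/
def encStream : Stream' ℕ := fun i => 2 ^ (2 * i)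

lemma exists_set_of_mem_FS :
    ∀ (c : Stream' ℕ) (mval : ℕ), mval ∈ FS c → ∀ n : ℕ, c = encStream.drop n →
      ∃ A : Finset ℕ, A.Nonempty ∧ (∀ t ∈ A, n ≤ t) ∧ setEnc A = mval := by
  intro c mval h
  induction h with
  | head' a =>
      intro n hn
      refine ⟨{n}, Finset.singleton_nonempty n, by simp, ?_⟩
      rw [hn, Stream'.head_drop]
      simp only [setEnc, Finset.sum_singleton]
      rfl
  | tail' a m _ ih =>
      intro n hn
      have : a.tail = encStream.drop (n + 1) := by
        rw [hn, Stream'.tail_eq_drop, Stream'.drop_drop, Nat.add_comm]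
      rcases ih (n + 1) this with ⟨A, hA1, hA2, hA3⟩
      exact ⟨A, hA1, fun t ht => le_trans (Nat.le_succ n) (hA2 t ht), hA3⟩
  | cons' a m _ ih =>
      intro n hn
      have htl : a.tail = encStream.drop (n + 1) := by
        rw [hn, Stream'.tail_eq_drop, Stream'.drop_drop, Nat.add_comm]
      rcases ih (n + 1) htl with ⟨A, hA1, hA2, hA3⟩
      have hhd : a.head = setEnc {n} := by
        rw [hn, Stream'.head_drop]
        simp only [setEnc, Finset.sum_singleton]
        rfl
      have hdisj : Disjoint ({n} : Finset ℕ) A := by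
        rw [Finset.disjoint_left]
        intro x hx hxA
        simp at hx
        have := hA2 x hxA
        omega
      refine ⟨{n} ∪ A, ?_, ?_, ?_⟩
      · exact Finset.Nonempty.mono Finset.subset_union_left (Finset.singleton_nonempty n)
      · intro t ht
        rcases Finset.mem_union.1 ht with ht | ht
        · simp at ht; omega
        · exact le_trans (Nat.le_succ n) (hA2 t ht)
      · rw [setEnc_union hdisj, hA3, hhd]

/-- Finite unions (Folkman–Hindman) theorem, infinite ground-set version:
for any coloring of `Finset ℕ` with finitely many colors there are `m` pairwise
disjoint nonempty finite sets all of whose nonempty unions get the same color. -/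
lemma folkman_unions (m : ℕ) {C : Type} [Finite C] (χ : Finset ℕ → C) :
    ∃ A : Fin m → Finset ℕ, (∀ j, (A j).Nonempty) ∧
      (∀ i j, i ≠ j → Disjoint (A i) (A j)) ∧
      ∃ γ : C, ∀ S : Finset (Fin m), S.Nonempty → χ (S.biUnion A) = γ := by
  classical
  -- decode a natural number to a finite set
  let dec : ℕ → Finset ℕ := fun nn => (nn.bitIndices.toFinset).image (fun i => i / 2)
  have hdec : ∀ A : Finset ℕ, dec (setEnc A) = A := by
    intro A
    have h1 : (setEnc A).bitIndices.toFinset = A.image (fun t => 2 * t) := by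
      rw [setEnc_eq_geomSum]
      exact Finset.toFinset_bitIndices_twoPowSum _
    show ((setEnc A).bitIndices.toFinset).image (fun i => i / 2) = A
    rw [h1, Finset.image_image]
    have : ((fun i => i / 2) ∘ fun t => 2 * t) = id := by
      funext t
      show 2 * t / 2 = t
      omega
    rw [this, Finset.image_id]
  let χ'' : ℕ → C := fun nn => χ (dec nn)
  -- apply Hindman's theorem
  have hcov : FS encStream ⊆ ⋃₀ (Set.range (fun γ : C => FS encStream ∩ χ'' ⁻¹' {γ})) := by
    intro x hx
    exact ⟨FS encStream ∩ χ'' ⁻¹' {χ'' x}, ⟨χ'' x, rfl⟩, hx, rfl⟩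
  rcases FS_partition_regular encStream _ (Set.finite_range _) hcov with
    ⟨cset, ⟨γ, rfl⟩, b, hb⟩
  -- decode the substream entries
  have hmem : ∀ j : ℕ, b.get j ∈ FS encStream ∩ χ'' ⁻¹' {γ} := fun j => hb (FS.singleton b j)
  have hex : ∀ j : Fin m, ∃ A : Finset ℕ, A.Nonempty ∧ setEnc A = b.get j := by
    intro j
    rcases exists_set_of_mem_FS encStream (b.get (j : ℕ)) (hmem j).1 0 rfl with
      ⟨A, hA1, -, hA3⟩
    exact ⟨A, hA1, hA3⟩
  choose A hA1 hA2 using hex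
  have hdisj : ∀ i j : Fin m, i ≠ j → Disjoint (A i) (A j) := by
    have key : ∀ i j : Fin m, (i : ℕ) < (j : ℕ) → Disjoint (A i) (A j) := by
      intro i j hij
      have hsum : b.get (i : ℕ) + b.get (j : ℕ) ∈ FS encStream :=
        (hb (FS.add_two b _ _ hij)).1
      rcases exists_set_of_mem_FS encStream _ hsum 0 rfl with ⟨D, -, -, hD⟩
      exact disjoint_of_setEnc_add (D := D) (by rw [hA2 i, hA2 j]; exact hD.symm)
    intro i j hij
    rcases lt_or_gt_of_ne (fun h : (i:ℕ) = (j:ℕ) => hij (Fin.ext h)) with h | h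
    · exact key i j h
    · exact (key j i h).symm
  refine ⟨A, hA1, hdisj, γ, ?_⟩
  intro S hS
  -- the sum of the encodings over S is in FS b
  have hsum_enc : ∑ j ∈ S, b.get (j : ℕ) = setEnc (S.biUnion A) := by
    have hpd : (S : Set (Fin m)).PairwiseDisjoint A := by
      intro i _ j _ hij
      exact hdisj i j hij
    rw [setEnc, Finset.sum_biUnion hpd]
    refine Finset.sum_congr rfl ?_
    intro j _
    rw [← hA2 j]
    rfl
  have himg : ∑ j ∈ S, b.get (j : ℕ) = ∑ i ∈ S.image (fun j : Fin m => (j : ℕ)), b.get i := by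
    rw [Finset.sum_image (by intro a _ b _ h; exact Fin.ext h)]
  have hmemFS : (∑ i ∈ S.image (fun j : Fin m => (j : ℕ)), b.get i) ∈ FS b := by
    apply FS.finset_sum
    exact hS.image _
  have : setEnc (S.biUnion A) ∈ FS encStream ∩ χ'' ⁻¹' {γ} := by
    rw [← hsum_enc, himg]
    exact hb hmemFS
  have := this.2
  simpa [χ'', hdec] using this

end Folkman

section UltrafilterConst

/-- Along an ultrafilter, a function into a finite type is a.e. constant. -/
lemma ultrafilter_exists_const {α C : Type*} [Finite C] (U : Ultrafilter α) (g : α → C) :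
    ∃ c : C, {x | g x = c} ∈ U := by
  have hcov : (Set.univ : Set α) ⊆ ⋃₀ (Set.range (fun c : C => {x | g x = c})) := by
    intro x _
    exact ⟨{y | g y = g x}, ⟨g x, rfl⟩, rfl⟩
  have : ⋃₀ (Set.range (fun c : C => {x | g x = c})) ∈ U :=
    Filter.mem_of_superset Filter.univ_mem hcov
  rcases (Ultrafilter.finite_sUnion_mem_iff (Set.finite_range _)).1 this with
    ⟨t, ⟨c, rfl⟩, ht⟩
  exact ⟨c, ht⟩

end UltrafilterConst

section SignSum

lemma sum_neg_one_pow_zero (n : ℕ) (hn : 0 < n) :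
    (∑ T : Finset (Fin n), ((-1 : ℤ) ^ (n - T.card))) = 0 := by
  classical
  have h1 : ∀ T : Finset (Fin n), ((-1 : ℤ) ^ (n - T.card))
      = (-1 : ℤ) ^ n * (-1 : ℤ) ^ T.card := by
    intro T
    have hle : T.card ≤ n := by simpa using Finset.card_le_univ T
    have e1 : (-1 : ℤ) ^ (T.card + T.card) = 1 := Even.neg_one_pow ⟨T.card, rfl⟩
    have e2 : (-1 : ℤ) ^ (n - T.card) = (-1 : ℤ) ^ (n - T.card) * (-1 : ℤ) ^ (T.card + T.card) := by
      rw [e1, mul_one]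
    rw [e2, ← pow_add]
    have e3 : n - T.card + (T.card + T.card) = n + T.card := by omega
    rw [e3, pow_add]
  rw [Finset.sum_congr rfl (fun T _ => h1 T), ← Finset.mul_sum]
  have h2 : (∑ T : Finset (Fin n), ((-1 : ℤ) ^ T.card)) = 0 := by
    have hsum := Finset.sum_powerset_neg_one_pow_card (α := Fin n) (x := Finset.univ)
    rw [Finset.powerset_univ] at hsum
    haveI : Nonempty (Fin n) := ⟨⟨0, hn⟩⟩
    rw [hsum, if_neg Finset.univ_nonempty.ne_empty]
  rw [h2, mul_zero]

lemma norm_neg_one_pow_zsmul {H : Type*} [SeminormedAddCommGroup H] (k : ℕ) (x : H) :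
    ‖((-1 : ℤ) ^ k) • x‖ = ‖x‖ := by
  rcases Nat.even_or_odd k with h | h
  · rw [Even.neg_one_pow h, one_smul]
  · rw [Odd.neg_one_pow h, neg_smul, one_smul, norm_neg]

end SignSum

/-- Proposition (cf. [B], Theorem 7.7): for any k, d ∈ ℕ and ε > 0 there is r such
that any k polynomial mappings in `Pol⁰_d([r], 𝕋)` (𝕋 = ℝ/ℤ) simultaneously come
ε-close to 0 at some nonempty α ⊆ [r]. -/
theorem pol0_torus_simultaneous_recurrence (k d : ℕ) (ε : ℝ) (hε : 0 < ε) :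
    ∃ r : ℕ, ∀ φ : Fin k → (Finset ℕ → UnitAddCircle),
      (∀ i, Pol0 (Finset.Icc 1 r) d (φ i)) →
      ∃ α : Finset ℕ, α.Nonempty ∧ α ⊆ Finset.Icc 1 r ∧
        ∀ i, dist (φ i α) 0 < ε := by
  classical
  by_contra hcon
  push_neg at hcon
  choose φr hφr1 hφr2 using hcon
  -- a δ-net of the circle
  set δ : ℝ := ε / 2 ^ (d + 2) with hδdef
  have hδ : 0 < δ := by positivity
  obtain ⟨t, -, htfin, htcov⟩ :=
    finite_cover_balls_of_compact (isCompact_univ (X := UnitAddCircle)) hδ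
  haveI := htfin.to_subtype
  have hnet : ∀ y : UnitAddCircle, ∃ p : t, dist y (p : UnitAddCircle) < δ := by
    intro y
    have := htcov (Set.mem_univ y)
    rcases Set.mem_iUnion₂.1 this with ⟨p, hp, hyp⟩
    exact ⟨⟨p, hp⟩, by simpa [Metric.mem_ball] using hyp⟩
  choose netp hnetp using hnet
  -- the coloring of finite sets, via an ultrafilter over r
  let U : Ultrafilter ℕ := Filter.hyperfilter ℕ
  let col : ℕ → Finset ℕ → (Fin k → t) := fun r α i => netp (φr r i (α.image Nat.succ))
  have hχ : ∀ α : Finset ℕ, ∃ c : Fin k → t, {r | col r α = c} ∈ U :=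
    fun α => ultrafilter_exists_const U (fun r => col r α)
  choose χ hχmem using hχ
  -- Folkman's theorem for this coloring
  obtain ⟨A, hA1, hA2, γ, hγ⟩ := folkman_unions (d + 1) χ
  set B : Fin (d + 1) → Finset ℕ := fun j => (A j).image Nat.succ with hBdef
  have hB1 : ∀ j, (B j).Nonempty := fun j => (hA1 j).image _
  have hB2 : ∀ i j, i ≠ j → Disjoint (B i) (B j) := by
    intro i j hij
    rw [Finset.disjoint_left]
    intro x hxi hxj
    rcases Finset.mem_image.1 hxi with ⟨a, ha, rfl⟩
    rcases Finset.mem_image.1 hxj with ⟨b, hb, hba⟩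
    have : b = a := Nat.succ_injective hba
    subst this
    exact (Finset.disjoint_left.1 (hA2 i j hij)) ha hb
  -- a bound for the elements of the B j
  set R0 : ℕ := ((Finset.univ.biUnion B).sup id) with hR0def
  have hBR0 : ∀ j, B j ⊆ Finset.Icc 1 R0 := by
    intro j x hx
    rcases Finset.mem_image.1 hx with ⟨a, _, rfl⟩
    refine Finset.mem_Icc.2 ⟨Nat.succ_le_succ (Nat.zero_le a), ?_⟩
    exact Finset.le_sup (f := id) (Finset.mem_biUnion.2 ⟨j, Finset.mem_univ j, hx⟩)
  -- choose a good r
  have hEvents : {r | R0 ≤ r} ∩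
      ⋂ S ∈ Finset.univ.filter (fun S : Finset (Fin (d+1)) => S.Nonempty),
        {r | col r (S.biUnion A) = χ (S.biUnion A)} ∈ U := by
    refine Filter.inter_mem ?_ ?_
    · apply Filter.mem_hyperfilter_of_finite_compl
      have : {r : ℕ | R0 ≤ r}ᶜ ⊆ Set.Iio R0 := by
        intro x hx
        simpa [Set.mem_Iio] using by
          simp only [Set.mem_compl_iff, Set.mem_setOf_eq, not_le] at hx
          exact hx
      exact (Set.finite_Iio R0).subset this
    · refine (Filter.biInter_mem (Finset.finite_toSet _)).2 ?_
      intro S _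
      exact hχmem (S.biUnion A)
  obtain ⟨r, hrR0, hrS⟩ := Ultrafilter.nonempty_of_mem hEvents
  rw [Set.mem_iInter₂] at hrS
  -- the chosen polynomial family
  have hpol := hφr1 r
  have hbad := hφr2 r
  have hBr : ∀ j, B j ⊆ Finset.Icc 1 r := by
    intro j
    refine (hBR0 j).trans ?_
    intro x hx
    rcases Finset.mem_Icc.1 hx with ⟨h1, h2⟩
    exact Finset.mem_Icc.2 ⟨h1, le_trans h2 hrR0⟩
  -- values at unions are δ-close to the net point γ
  have hval : ∀ (S : Finset (Fin (d+1))), S.Nonempty → ∀ i,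
      dist (φr r i (S.biUnion B)) ((γ i : UnitAddCircle)) < δ := by
    intro S hS i
    have h1 : col r (S.biUnion A) = χ (S.biUnion A) :=
      hrS S (Finset.mem_filter.2 ⟨Finset.mem_univ S, hS⟩)
    have h2 : χ (S.biUnion A) = γ := hγ S hS
    have h3 : (S.biUnion A).image Nat.succ = S.biUnion B := by
      rw [Finset.biUnion_image]
    have h4 : netp (φr r i (S.biUnion B)) = γ i := by
      have := congrFun (h1.trans h2) i
      rwa [show col r (S.biUnion A) i = netp (φr r i (S.biUnion B)) by rw [← h3]] at this
    calc dist (φr r i (S.biUnion B)) ((γ i : UnitAddCircle))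
        = dist (φr r i (S.biUnion B)) (netp (φr r i (S.biUnion B)) : UnitAddCircle) := by
          rw [h4]
      _ < δ := hnetp _
  -- the alternating-sum identity at these unions
  have hkey : ∀ i, ∑ T : Finset (Fin (d+1)), ((-1 : ℤ) ^ (d + 1 - T.card)) •
      (φr r i (T.biUnion B)) = 0 := by
    intro i
    have := (hpol i).1 B hBr hB2 ∅ (Finset.empty_subset _) (fun _ => Finset.disjoint_empty_left _)
    rw [iterDeriv_eq_sum] at this
    simpa using this
  -- the final estimate
  set j0 : Fin (d + 1) := ⟨0, Nat.succ_pos d⟩ with hj0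
  obtain ⟨i, hi⟩ := hbad (B j0) (hB1 j0) (hBr j0)
  set ψ : Finset ℕ → UnitAddCircle := φr r i with hψ
  set x : UnitAddCircle := (γ i : UnitAddCircle) with hx
  have hψ0 : ψ ∅ = 0 := (hpol i).2
  -- split off the empty set from the identity
  have hsplit : ∑ T ∈ Finset.univ.filter (fun T : Finset (Fin (d+1)) => T.Nonempty),
      ((-1 : ℤ) ^ (d + 1 - T.card)) • (ψ (T.biUnion B)) = 0 := by
    have h0 := hkey i
    rw [← Finset.sum_filter_add_sum_filter_not Finset.univ
      (fun T : Finset (Fin (d+1)) => T.Nonempty)] at h0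
    have hempty : ∑ T ∈ Finset.univ.filter
        (fun T : Finset (Fin (d+1)) => ¬ T.Nonempty),
        ((-1 : ℤ) ^ (d + 1 - T.card)) • (ψ (T.biUnion B)) = 0 := by
      have : Finset.univ.filter (fun T : Finset (Fin (d+1)) => ¬ T.Nonempty) = {∅} := by
        ext T
        simp [Finset.not_nonempty_iff_eq_empty]
      rw [this, Finset.sum_singleton]
      simp [hψ0]
    rw [hempty, add_zero] at h0
    exact h0
  -- the coefficient sum over nonempty T is ± 1
  have hcoeff : ∑ T ∈ Finset.univ.filter (fun T : Finset (Fin (d+1)) => T.Nonempty),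
      ((-1 : ℤ) ^ (d + 1 - T.card)) = -((-1 : ℤ) ^ (d + 1)) := by
    have h0 := sum_neg_one_pow_zero (d + 1) (Nat.succ_pos d)
    rw [← Finset.sum_filter_add_sum_filter_not Finset.univ
      (fun T : Finset (Fin (d+1)) => T.Nonempty)] at h0
    have hempty : ∑ T ∈ Finset.univ.filter
        (fun T : Finset (Fin (d+1)) => ¬ T.Nonempty),
        ((-1 : ℤ) ^ (d + 1 - T.card)) = (-1 : ℤ) ^ (d + 1) := by
      have : Finset.univ.filter (fun T : Finset (Fin (d+1)) => ¬ T.Nonempty) = {∅} := by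
        ext T
        simp [Finset.not_nonempty_iff_eq_empty]
      rw [this, Finset.sum_singleton]
      simp
    rw [hempty] at h0
    linarith
  -- norm estimate for x
  set N := Finset.univ.filter (fun T : Finset (Fin (d+1)) => T.Nonempty) with hN
  have hxnorm : ‖x‖ ≤ 2 ^ (d + 1) * δ := by
    have hc : (-((-1 : ℤ) ^ (d + 1))) = (-1 : ℤ) ^ (d + 2) := by
      rw [pow_succ]
      ring
    have h1 : (∑ T ∈ N, ((-1 : ℤ) ^ (d + 1 - T.card))) • x
        = ∑ T ∈ N, ((-1 : ℤ) ^ (d + 1 - T.card)) • x := Finset.sum_smul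
    have h2 : ((-1 : ℤ) ^ (d + 2)) • x
        = ∑ T ∈ N, ((-1 : ℤ) ^ (d + 1 - T.card)) • (x - ψ (T.biUnion B)) := by
      rw [← hc, ← hcoeff, h1]
      rw [← sub_zero (∑ T ∈ N, ((-1 : ℤ) ^ (d + 1 - T.card)) • x), ← hsplit,
        ← Finset.sum_sub_distrib]
      refine Finset.sum_congr rfl ?_
      intro T _
      rw [smul_sub]
    have h3 : ‖x‖ = ‖((-1 : ℤ) ^ (d + 2)) • x‖ := (norm_neg_one_pow_zsmul _ x).symm
    rw [h3, h2]
    calc ‖∑ T ∈ N, ((-1 : ℤ) ^ (d + 1 - T.card)) • (x - ψ (T.biUnion B))‖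
        ≤ ∑ T ∈ N, ‖((-1 : ℤ) ^ (d + 1 - T.card)) • (x - ψ (T.biUnion B))‖ :=
          norm_sum_le _ _
      _ = ∑ T ∈ N, ‖x - ψ (T.biUnion B)‖ := by
          refine Finset.sum_congr rfl ?_
          intro T _
          exact norm_neg_one_pow_zsmul _ _
      _ ≤ ∑ _T ∈ N, δ := by
          refine Finset.sum_le_sum ?_
          intro T hT
          have hTne : T.Nonempty := (Finset.mem_filter.1 hT).2
          have := hval T hTne i
          rw [dist_eq_norm] at this
          rw [norm_sub_rev]
          exact le_of_lt this
      _ = (N.card : ℝ) * δ := by rw [Finset.sum_const, nsmul_eq_mul]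
      _ ≤ 2 ^ (d + 1) * δ := by
          refine mul_le_mul_of_nonneg_right ?_ (le_of_lt hδ)
          have : N.card ≤ 2 ^ (d + 1) := by
            calc N.card ≤ (Finset.univ : Finset (Finset (Fin (d+1)))).card :=
                  Finset.card_le_card (Finset.filter_subset _ _)
              _ = 2 ^ (d + 1) := by
                  rw [Finset.card_univ, Fintype.card_finset, Fintype.card_fin]
          exact_mod_cast this
  -- conclude
  have hsingle : dist (ψ (B j0)) x < δ := by
    have := hval {j0} (Finset.singleton_nonempty j0) i
    rwa [Finset.singleton_biUnion] at this
  have : dist (ψ (B j0)) 0 < ε := by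
    calc dist (ψ (B j0)) 0 ≤ dist (ψ (B j0)) x + dist x 0 := dist_triangle _ _ _
      _ < δ + 2 ^ (d + 1) * δ := by
          refine add_lt_add_of_lt_of_le hsingle ?_
          rw [dist_zero_right]
          exact hxnorm
      _ ≤ 2 ^ (d + 2) * δ := by
          have h2 : (1 : ℝ) + 2 ^ (d + 1) ≤ 2 ^ (d + 2) := by
            have : (2 : ℝ) ^ (d + 2) = 2 ^ (d + 1) + 2 ^ (d + 1) := by ring
            have h1 : (1 : ℝ) ≤ 2 ^ (d + 1) := by
              have hn : (1 : ℕ) ≤ 2 ^ (d + 1) := Nat.one_le_two_pow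
              exact_mod_cast hn
            linarith
          nlinarith [le_of_lt hδ]
      _ = ε := by
          rw [hδdef]
          field_simp
  exact absurd hi (not_le.2 this)
end

section
/- For any k, d ∈ ℕ and ε > 0 there exists r = r(k,d,ε) ∈ ℕ such that for any polynomial mappings φ_1,…,φ_k ∈ Pol⁰_d([r], ℝ) there exists a nonempty finite set α ⊆ [r] such that ‖φ_i(α)‖ < ε for all i ∈ {1,…,k}. -/
open Finset

lemma distToInt_nonneg (x : ℝ) : 0 ≤ distToInt x := abs_nonneg _

lemma distToInt_zero : distToInt 0 = 0 := by simp [distToInt]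

lemma distToInt_le_abs_sub (x : ℝ) (m : ℤ) : distToInt x ≤ |x - m| := by
  unfold distToInt
  rcases le_or_gt (1/2 : ℝ) |x - (m:ℝ)| with h | h
  · exact (abs_sub_round x).trans h
  · have habs := abs_lt.mp h
    have hm : round x = m := by
      rw [round_eq, Int.floor_eq_iff]
      constructor
      · push_cast; linarith [habs.1]
      · push_cast; linarith [habs.2]
    rw [hm]

lemma distToInt_add_le (x y : ℝ) : distToInt (x + y) ≤ distToInt x + distToInt y := by
  refine (distToInt_le_abs_sub (x + y) (round x + round y)).trans ?_
  unfold distToInt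
  push_cast
  have h : x + y - ((round x : ℝ) + round y) = (x - round x) + (y - round y) := by ring
  rw [h]
  exact abs_add_le _ _

lemma distToInt_neg (x : ℝ) : distToInt (-x) = distToInt x := by
  have key : ∀ y : ℝ, distToInt (-y) ≤ distToInt y := by
    intro y
    refine (distToInt_le_abs_sub (-y) (-round y)).trans ?_
    unfold distToInt
    push_cast
    rw [show -y - -(round y : ℝ) = -(y - round y) by ring, abs_neg]
  refine le_antisymm (key x) ?_
  simpa using key (-x)

lemma distToInt_sub_le (x y : ℝ) : distToInt (x - y) ≤ distToInt x + distToInt y := by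
  rw [sub_eq_add_neg]
  refine (distToInt_add_le x (-y)).trans ?_
  rw [distToInt_neg]

lemma distToInt_triangle (x y : ℝ) : distToInt x ≤ distToInt (x - y) + distToInt y := by
  simpa using distToInt_add_le (x - y) y

lemma isPolyDeg_mono {A B : Finset ℕ} {d : ℕ} {φ : Finset ℕ → ℝ}
    (h : IsPolyDeg A d φ) (hBA : B ⊆ A) : IsPolyDeg B d φ :=
  fun β hβ hdisj α hα hαd => h β (fun i => (hβ i).trans hBA) hdisj α (hα.trans hBA) hαd

lemma fsDeriv_sub_const (φ : Finset ℕ → ℝ) (c : ℝ) (β : Finset ℕ) :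
    fsDeriv (fun α => φ α - c) β = fsDeriv φ β := by
  funext α; unfold fsDeriv; ring

lemma isPolyDeg_sub_const {A : Finset ℕ} {d : ℕ} {φ : Finset ℕ → ℝ}
    (h : IsPolyDeg A d φ) (c : ℝ) : IsPolyDeg A d (fun α => φ α - c) := by
  intro β hβ hd α hα hαd
  have heq : iterDeriv (fun α => φ α - c) β = iterDeriv φ β := by
    show iterDeriv (fsDeriv (fun α => φ α - c) (β 0)) (fun i => β i.succ)
        = iterDeriv (fsDeriv φ (β 0)) (fun i => β i.succ)
    rw [fsDeriv_sub_const]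
  rw [heq]; exact h β hβ hd α hα hαd

lemma isPolyDeg_fsDeriv {A β : Finset ℕ} {d : ℕ} {φ : Finset ℕ → ℝ}
    (h : IsPolyDeg A (d+1) φ) (hβ : β ⊆ A) : IsPolyDeg (A \ β) d (fsDeriv φ β) := by
  intro β' hβ' hd' α hα hαd
  let B : Fin (d+2) → Finset ℕ := Fin.cons β β'
  have hsub : ∀ i, B i ⊆ A := by
    intro i
    induction i using Fin.cases with
    | zero => simpa [B, Fin.cons_zero] using hβ
    | succ j => simpa [B, Fin.cons_succ] using (hβ' j).trans (Finset.sdiff_subset)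
  have hdisjβ : ∀ j, Disjoint β (β' j) := by
    intro j
    exact (Finset.disjoint_of_subset_right (hβ' j) Finset.disjoint_sdiff)
  have hpair : ∀ i j, i ≠ j → Disjoint (B i) (B j) := by
    intro i j
    induction i using Fin.cases with
    | zero =>
      induction j using Fin.cases with
      | zero => exact fun hij => absurd rfl hij
      | succ j' => intro _; simpa [B, Fin.cons_zero, Fin.cons_succ] using hdisjβ j'
    | succ i' =>
      induction j using Fin.cases with
      | zero => intro _; simpa [B, Fin.cons_zero, Fin.cons_succ] using (hdisjβ i').symm
      | succ j' =>
        intro hij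
        simp only [B, Fin.cons_succ]
        exact hd' i' j' (by intro h'; exact hij (by rw [h']))
  have hαd' : ∀ i, Disjoint α (B i) := by
    intro i
    induction i using Fin.cases with
    | zero => simpa [B, Fin.cons_zero] using Finset.disjoint_of_subset_left hα Finset.sdiff_disjoint
    | succ j => simpa [B, Fin.cons_succ] using hαd j
  have key := h B hsub hpair α (hα.trans Finset.sdiff_subset) hαd'
  have heq : iterDeriv φ B = iterDeriv (fsDeriv φ β) β' := by
    show iterDeriv (fsDeriv φ (B 0)) (fun i => B i.succ) = _
    simp only [B, Fin.cons_zero, Fin.cons_succ]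
  rwa [heq] at key

lemma isPolyDeg_zero_eval {A : Finset ℕ} {φ : Finset ℕ → ℝ} (h : IsPolyDeg A 0 φ)
    (h0 : φ ∅ = 0) {α : Finset ℕ} (hα : α ⊆ A) : φ α = 0 := by
  have key := h (fun _ => α) (fun _ => hα)
    (fun i j hij => absurd (Fin.ext (by omega)) hij) ∅ (Finset.empty_subset A)
    (fun _ => by simp)
  simpa [iterDeriv, fsDeriv, h0] using key

lemma exists_disjoint_family (r' : ℕ) : ∀ (N : ℕ) (A : Finset ℕ), N * r' ≤ A.card →
    ∃ I : ℕ → Finset ℕ, (∀ j, I j ⊆ A) ∧ (∀ j < N, r' ≤ (I j).card) ∧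
      (∀ j j', j ≠ j' → Disjoint (I j) (I j')) := by
  intro N
  induction N with
  | zero =>
    intro A _
    exact ⟨fun _ => ∅, fun _ => Finset.empty_subset A, fun j hj => absurd hj (by omega),
      fun _ _ _ => by simp⟩
  | succ N ih =>
    intro A hA
    have hr'A : r' ≤ A.card := le_trans (by nlinarith) hA
    obtain ⟨S, hSA, hScard⟩ := Finset.exists_subset_card_eq hr'A
    have hcard : N * r' ≤ (A \ S).card := by
      rw [Finset.card_sdiff_of_subset hSA, hScard]
      have : (N + 1) * r' = N * r' + r' := by ring
      omega
    obtain ⟨I, hIsub, hIcard, hIdisj⟩ := ih (A \ S) hcard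
    refine ⟨fun j => Nat.casesOn j S I, ?_, ?_, ?_⟩
    · intro j
      cases j with
      | zero => exact hSA
      | succ j => exact (hIsub j).trans Finset.sdiff_subset
    · intro j hj
      cases j with
      | zero => exact le_of_eq hScard.symm
      | succ j => exact hIcard j (by omega)
    · intro j j' hjj'
      cases j with
      | zero =>
        cases j' with
        | zero => exact absurd rfl hjj'
        | succ j' =>
          exact (Finset.disjoint_of_subset_right (hIsub j') Finset.disjoint_sdiff)
      | succ j =>
        cases j' with
        | zero =>
          exact (Finset.disjoint_of_subset_left (hIsub j) Finset.sdiff_disjoint)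
        | succ j' => exact hIdisj j j' (by omega)

theorem key (d : ℕ) : ∀ (G : Type) [Fintype G] (ε : ℝ), 0 < ε →
    ∃ r : ℕ, ∀ A : Finset ℕ, r ≤ A.card →
      ∀ φ : G → (Finset ℕ → ℝ), (∀ i, IsPolyDeg A d (φ i)) → (∀ i, φ i ∅ = 0) →
      ∃ α : Finset ℕ, α.Nonempty ∧ α ⊆ A ∧ ∀ i, distToInt (φ i α) < ε := by
  induction d with
  | zero =>
    intro G _ ε hε
    refine ⟨1, ?_⟩
    intro A hA φ hφ hφ0
    obtain ⟨x, hx⟩ := Finset.card_pos.mp (show 0 < A.card by omega)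
    refine ⟨{x}, Finset.singleton_nonempty x, Finset.singleton_subset_iff.mpr hx, ?_⟩
    intro i
    rw [isPolyDeg_zero_eval (hφ i) (hφ0 i) (Finset.singleton_subset_iff.mpr hx), distToInt_zero]
    exact hε
  | succ d ih =>
    intro G instG ε hε
    classical
    set B : ℕ := ⌈(2:ℝ)/ε⌉₊ with hBdef
    have hBpos : 0 < B := Nat.ceil_pos.mpr (by positivity)
    have hBR : (0:ℝ) < B := by exact_mod_cast hBpos
    have hBε : (1:ℝ)/B ≤ ε/2 := by
      have h1 : (2:ℝ)/ε ≤ B := Nat.le_ceil _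
      rw [div_le_div_iff₀ hBR (by norm_num : (0:ℝ) < 2)]
      rw [div_le_iff₀ hε] at h1
      nlinarith
    set N : ℕ := B ^ Fintype.card G with hNdef
    have hNpos : 0 < N := pow_pos hBpos _
    set δ : ℝ := ε / (2*(N+1)) with hδdef
    have hδ : 0 < δ := by positivity
    obtain ⟨r', hr'⟩ := ih (G × Fin (N+1)) δ hδ
    refine ⟨N * r', ?_⟩
    intro A hA φ hφ hφ0
    obtain ⟨I, hIA, hIcard, hIdisj⟩ := exists_disjoint_family r' N A hA
    -- Build the sequence a
    have build : ∀ n, n ≤ N → ∃ a : ℕ → Finset ℕ, ∀ j < n, a j ⊆ I j ∧ (a j).Nonempty ∧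
        ∀ (i : G) (m : ℕ), distToInt (φ i (a j ∪ (Finset.Ico m j).biUnion a)
          - φ i (a j) - φ i ((Finset.Ico m j).biUnion a)) < δ := by
      intro n
      induction n with
      | zero => exact fun _ => ⟨fun _ => ∅, fun j hj => absurd hj (by omega)⟩
      | succ n ihn =>
        intro hn
        obtain ⟨a, ha⟩ := ihn (by omega)
        set U : ℕ → Finset ℕ := fun m => (Finset.Ico m n).biUnion a with hUdef
        have hUA : ∀ m, U m ⊆ A := by
          intro m
          refine Finset.biUnion_subset.mpr ?_
          intro t ht
          exact ((ha t (Finset.mem_Ico.mp ht).2).1).trans (hIA t)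
        have hUIn : ∀ m, Disjoint (I n) (U m) := by
          intro m
          refine Finset.disjoint_biUnion_right _ _ _ |>.mpr ?_
          intro t ht
          refine Finset.disjoint_of_subset_right ((ha t (Finset.mem_Ico.mp ht).2).1) ?_
          exact hIdisj n t (by have := (Finset.mem_Ico.mp ht).2; omega)
        set ψ : G × Fin (N+1) → (Finset ℕ → ℝ) :=
          fun p => fun γ => φ p.1 (γ ∪ U p.2) - φ p.1 γ - φ p.1 (U p.2) with hψdef
        have hψpoly : ∀ p, IsPolyDeg (I n) d (ψ p) := by
          intro p
          have h1 : IsPolyDeg (A \ U p.2) d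
              (fun γ => fsDeriv (φ p.1) (U p.2) γ - φ p.1 (U p.2)) :=
            isPolyDeg_sub_const (isPolyDeg_fsDeriv (hφ p.1) (hUA p.2)) _
          exact isPolyDeg_mono h1 (Finset.subset_sdiff.mpr ⟨hIA n, hUIn p.2⟩)
        have hψ0 : ∀ p, ψ p ∅ = 0 := by
          intro p
          simp [hψdef, Finset.empty_union, hφ0 p.1]
        obtain ⟨α, hαne, hαI, hαδ⟩ := hr' (I n) (hIcard n (by omega)) ψ hψpoly hψ0
        refine ⟨Function.update a n α, ?_⟩
        have hupd : ∀ (m j : ℕ), j ≤ n →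
            (Finset.Ico m j).biUnion (Function.update a n α) = (Finset.Ico m j).biUnion a := by
          intro m j hj
          refine Finset.biUnion_congr rfl ?_
          intro t ht
          have : t < n := lt_of_lt_of_le (Finset.mem_Ico.mp ht).2 hj
          rw [Function.update_of_ne (by omega)]
        intro j hj
        rcases Nat.lt_or_ge j n with hjn | hjn
        · obtain ⟨h1, h2, h3⟩ := ha j hjn
          rw [Function.update_of_ne (by omega : j ≠ n)]
          refine ⟨h1, h2, ?_⟩
          intro i m
          rw [hupd m j (by omega)]
          exact h3 i m
        · have hjn' : j = n := by omega
          subst hjn'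
          rw [Function.update_self]
          refine ⟨hαI, hαne, ?_⟩
          intro i m
          rw [hupd m j le_rfl]
          rcases le_or_gt m j with hmj | hmj
          · have := hαδ (i, ⟨m, by omega⟩)
            simpa [hψdef, hUdef] using this
          · have hempty : Finset.Ico m j = ∅ := Finset.Ico_eq_empty (by omega)
            rw [hempty]
            simp [hφ0 i, distToInt_zero, hδ]
    obtain ⟨a, ha⟩ := build N le_rfl
    -- Key estimate
    have est : ∀ (i : G) (m m' : ℕ), m ≤ m' → m' ≤ N →
        distToInt (φ i ((Finset.Ico m m').biUnion a) - ∑ j ∈ Finset.Ico m m', φ i (a j))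
          ≤ (m' - m : ℕ) * δ := by
      intro i m m' hmm'
      induction m', hmm' using Nat.le_induction with
      | base =>
        intro _
        simp [Finset.Ico_self, hφ0 i, distToInt_zero]
      | succ m' hm ihm =>
        intro hN'
        have hIH := ihm (by omega)
        have hρ := (ha m' (by omega)).2.2 i m
        have hins : Finset.Ico m (m'+1) = insert m' (Finset.Ico m m') :=
          Nat.Ico_succ_right_eq_insert_Ico hm
        have hm'notin : m' ∉ Finset.Ico m m' := by simp
        have hids : φ i ((Finset.Ico m (m'+1)).biUnion a) - ∑ j ∈ Finset.Ico m (m'+1), φ i (a j)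
            = (φ i ((Finset.Ico m m').biUnion a) - ∑ j ∈ Finset.Ico m m', φ i (a j))
              + (φ i (a m' ∪ (Finset.Ico m m').biUnion a) - φ i (a m')
                - φ i ((Finset.Ico m m').biUnion a)) := by
          rw [hins, Finset.biUnion_insert, Finset.sum_insert hm'notin]
          ring
        rw [hids]
        refine (distToInt_add_le _ _).trans ?_
        have hc : ((m' + 1 - m : ℕ) : ℝ) = ((m' - m : ℕ) : ℝ) + 1 := by
          have h' : m' + 1 - m = (m' - m) + 1 := by omega
          rw [h']; push_cast; ring
        rw [hc, add_mul, one_mul]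
        exact add_le_add hIH (le_of_lt hρ)
    -- Pigeonhole
    set P : ℕ → G → ℝ := fun m i => ∑ j ∈ Finset.range m, φ i (a j) with hPdef
    have hFlt : ∀ (m : ℕ) (i : G), ⌊Int.fract (P m i) * B⌋₊ < B := by
      intro m i
      rw [Nat.floor_lt (mul_nonneg (Int.fract_nonneg _) hBR.le)]
      calc Int.fract (P m i) * B < 1 * B :=
            mul_lt_mul_of_pos_right (Int.fract_lt_one _) hBR
        _ = B := one_mul _
    set F : Fin (N+1) → G → Fin B := fun m i => ⟨⌊Int.fract (P m.val i) * B⌋₊, hFlt m.val i⟩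
      with hFdef
    have hcard : Fintype.card (G → Fin B) < Fintype.card (Fin (N+1)) := by
      rw [Fintype.card_fun, Fintype.card_fin, Fintype.card_fin]
      omega
    obtain ⟨m₁, m₂, hne, heqF⟩ := Fintype.exists_ne_map_eq_of_card_lt F hcard
    have main : ∀ u v : Fin (N+1), (u:ℕ) < (v:ℕ) → F u = F v →
        ∃ α : Finset ℕ, α.Nonempty ∧ α ⊆ A ∧ ∀ i, distToInt (φ i α) < ε := by
      intro u v huv hFeq
      refine ⟨(Finset.Ico (u:ℕ) (v:ℕ)).biUnion a, ?_, ?_, ?_⟩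
      · have hu : (u:ℕ) ∈ Finset.Ico (u:ℕ) (v:ℕ) := Finset.mem_Ico.mpr ⟨le_rfl, huv⟩
        obtain ⟨x, hx⟩ := (ha u (by omega)).2.1
        exact ⟨x, Finset.mem_biUnion.mpr ⟨u, hu, hx⟩⟩
      · refine Finset.biUnion_subset.mpr ?_
        intro t ht
        have htN : t < N := by
          have := (Finset.mem_Ico.mp ht).2
          omega
        exact ((ha t htN).1).trans (hIA t)
      · intro i
        have hQ : ∑ j ∈ Finset.Ico (u:ℕ) (v:ℕ), φ i (a j) = P v i - P u i := by
          rw [hPdef]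
          exact Finset.sum_Ico_eq_sub _ (le_of_lt huv)
        have hest := est i u v (le_of_lt huv) (by omega)
        rw [hQ] at hest
        have hfrac : distToInt (P v i - P u i) < 1/B := by
          have hcv : ((F u i : Fin B) : ℕ) = ((F v i : Fin B) : ℕ) := by rw [hFeq]
          simp only [hFdef] at hcv
          have b1 : (⌊Int.fract (P u i) * B⌋₊ : ℝ) ≤ Int.fract (P u i) * B :=
            Nat.floor_le (mul_nonneg (Int.fract_nonneg _) hBR.le)
          have b2 : Int.fract (P u i) * B < ⌊Int.fract (P u i) * B⌋₊ + 1 :=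
            Nat.lt_floor_add_one _
          have b3 : (⌊Int.fract (P v i) * B⌋₊ : ℝ) ≤ Int.fract (P v i) * B :=
            Nat.floor_le (mul_nonneg (Int.fract_nonneg _) hBR.le)
          have b4 : Int.fract (P v i) * B < ⌊Int.fract (P v i) * B⌋₊ + 1 :=
            Nat.lt_floor_add_one _
          have hcast : ((⌊Int.fract (P u i) * B⌋₊ : ℕ) : ℝ) = ((⌊Int.fract (P v i) * B⌋₊ : ℕ) : ℝ) := by
            exact_mod_cast hcv
          have h1 : |Int.fract (P v i) - Int.fract (P u i)| < 1/B := by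
            rw [abs_lt]
            constructor
            · have h2 : (-1:ℝ)/B < Int.fract (P v i) - Int.fract (P u i) := by
                rw [div_lt_iff₀ hBR]; nlinarith
              simpa [neg_div] using h2
            · rw [lt_div_iff₀ hBR]; nlinarith
          refine lt_of_le_of_lt ?_ h1
          have hfr : P v i - P u i - ((⌊P v i⌋ - ⌊P u i⌋ : ℤ) : ℝ)
              = Int.fract (P v i) - Int.fract (P u i) := by
            rw [Int.fract, Int.fract]
            push_cast
            ring
          calc distToInt (P v i - P u i)
              ≤ |P v i - P u i - ((⌊P v i⌋ - ⌊P u i⌋ : ℤ) : ℝ)| := distToInt_le_abs_sub _ _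
            _ = |Int.fract (P v i) - Int.fract (P u i)| := by rw [hfr]
        have hNδ : ((v - u : ℕ) : ℝ) * δ < ε/2 := by
          have hvu : (((v:ℕ) - (u:ℕ) : ℕ) : ℝ) ≤ (N:ℝ) := by
            have h' : (v:ℕ) - (u:ℕ) ≤ N := by omega
            exact_mod_cast h'
          have hN1 : (0:ℝ) < 2*((N:ℝ)+1) := by positivity
          have hx : (2*((N:ℝ)+1)) * δ = ε := by
            rw [hδdef]; field_simp
          nlinarith [hδ, hvu, hx]
        calc distToInt (φ i ((Finset.Ico (u:ℕ) (v:ℕ)).biUnion a))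
            ≤ distToInt (φ i ((Finset.Ico (u:ℕ) (v:ℕ)).biUnion a) - (P v i - P u i))
              + distToInt (P v i - P u i) := distToInt_triangle _ _
          _ < ε/2 + ε/2 := add_lt_add_of_le_of_lt (hest.trans (le_of_lt hNδ)) (lt_of_lt_of_le hfrac hBε)
          _ = ε := by ring
    have hvne : (m₁:ℕ) ≠ (m₂:ℕ) := fun h => hne (Fin.ext h)
    rcases hvne.lt_or_gt with h | h
    · exact main m₁ m₂ h heqF
    · exact main m₂ m₁ h heqF.symm

/-- Proposition: for any k, d ∈ ℕ and ε > 0 there is r such that any k polynomial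
mappings in `Pol⁰_d([r], ℝ)` simultaneously take a value within ε of ℤ at some
nonempty α ⊆ [r]. -/
theorem pol0_simultaneous_near_int (k d : ℕ) (ε : ℝ) (hε : 0 < ε) :
    ∃ r : ℕ, ∀ φ : Fin k → (Finset ℕ → ℝ),
      (∀ i, Pol0 (Finset.Icc 1 r) d (φ i)) →
      ∃ α : Finset ℕ, α.Nonempty ∧ α ⊆ Finset.Icc 1 r ∧
        ∀ i, distToInt (φ i α) < ε := by
  obtain ⟨r, hr⟩ := key d (Fin k) ε hε
  refine ⟨r, ?_⟩
  intro φ hφ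
  exact hr (Finset.Icc 1 r) (by rw [Nat.card_Icc]; omega) φ (fun i => (hφ i).1)
    (fun i => (hφ i).2)
end
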